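/- Let $(\phi_k) \subseteq X_2$ be a $q$-Bessel sequence for $X_2^*$ with bound $B_2$, let $m \in \ell^{p_1}$ with $1/p_1 + 1/q_1 = 1$, and let $(\psi_k^{(l)}), (\psi_k) \subseteq X_1^*$ be $p$-Bessel sequences such that $(\psi_k^{(l)})$ converges to $(\psi_k)$ in the $\ell^{q_1}$-sense, i.e., $\left(\sum_k \|\psi_k^{(l)} - \psi_k\|^{q_1}\right)^{1/q_1} \to 0$ as $l \to \infty$. Then $\|\mathbf{M}_{m,(\phi_k),(\psi_k^{(l)})} - \mathbf{M}_{m,(\phi_k),(\psi_k)}\|_{Op} \to 0$; indeed the operator norm of the difference is bounded by $B_2 \|m\|_{p_1} \left(\sum_k \|\psi_k^{(l)} - \psi_k\|^{q_1}\right)^{1/q_1}$. -/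

import Mathlib

open Filter
open scoped ENNReal

lemma holder_aux {E : Type*} [NormedAddCommGroup E]
    (p₁ q₁ : ℝ≥0∞) [Fact (1 ≤ p₁)] [Fact (1 ≤ q₁)] (hpq₁ : 1 / p₁ + 1 / q₁ = 1)
    (f : lp (fun _ : ℕ => ℝ) p₁) (g : lp (fun _ : ℕ => E) q₁) :
    Summable (fun k => ‖f k‖ * ‖g k‖) ∧ ∑' k, ‖f k‖ * ‖g k‖ ≤ ‖f‖ * ‖g‖ := by
  have hp1 : 1 ≤ p₁ := Fact.out
  have hq1 : 1 ≤ q₁ := Fact.out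
  rcases eq_or_ne q₁ ∞ with hq | hq
  · subst hq
    have hp : p₁ = 1 := by
      rw [one_div, one_div] at hpq₁
      simp only [ENNReal.inv_top, add_zero] at hpq₁
      rwa [ENNReal.inv_eq_one] at hpq₁
    subst hp
    have hsf : Summable fun k => ‖f k‖ := by
      have := (lp.memℓp f).summable (p := 1) (by norm_num)
      simpa using this
    have hgb : ∀ k, ‖g k‖ ≤ ‖g‖ := fun k => lp.norm_apply_le_norm (by norm_num) g k
    have hsum : Summable fun k => ‖f k‖ * ‖g k‖ := by
      refine Summable.of_nonneg_of_le (fun k => by positivity) (fun k => ?_) (hsf.mul_right ‖g‖)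
      exact mul_le_mul_of_nonneg_left (hgb k) (norm_nonneg _)
    refine ⟨hsum, ?_⟩
    have : ∑' k, ‖f k‖ * ‖g k‖ ≤ ∑' k, ‖f k‖ * ‖g‖ := by
      refine Summable.tsum_le_tsum (fun k => mul_le_mul_of_nonneg_left (hgb k) (norm_nonneg _)) hsum
        (hsf.mul_right ‖g‖)
    refine this.trans ?_
    rw [tsum_mul_right]
    have hfn : ‖f‖ = ∑' k, ‖f k‖ := by
      have := lp.norm_eq_tsum_rpow (p := 1) (by norm_num) f
      simpa using this
    rw [hfn]
  · rcases eq_or_ne p₁ ∞ with hp | hp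
    · subst hp
      have hq' : q₁ = 1 := by
        rw [one_div, one_div] at hpq₁
        simp only [ENNReal.inv_top, zero_add] at hpq₁
        rwa [ENNReal.inv_eq_one] at hpq₁
      subst hq'
      have hsg : Summable fun k => ‖g k‖ := by
        have := (lp.memℓp g).summable (p := 1) (by norm_num)
        simpa using this
      have hfb : ∀ k, ‖f k‖ ≤ ‖f‖ := fun k => lp.norm_apply_le_norm (by norm_num) f k
      have hsum : Summable fun k => ‖f k‖ * ‖g k‖ := by
        refine Summable.of_nonneg_of_le (fun k => by positivity) (fun k => ?_) (hsg.mul_left ‖f‖)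
        exact mul_le_mul_of_nonneg_right (hfb k) (norm_nonneg _)
      refine ⟨hsum, ?_⟩
      have : ∑' k, ‖f k‖ * ‖g k‖ ≤ ∑' k, ‖f‖ * ‖g k‖ := by
        refine Summable.tsum_le_tsum (fun k => mul_le_mul_of_nonneg_right (hfb k) (norm_nonneg _)) hsum
          (hsg.mul_left ‖f‖)
      refine this.trans ?_
      rw [tsum_mul_left]
      have hgn : ‖g‖ = ∑' k, ‖g k‖ := by
        have := lp.norm_eq_tsum_rpow (p := 1) (by norm_num) g
        simpa using this
      rw [hgn]
    · -- both finite
      have hp1' : p₁ ≠ 1 := by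
        rintro rfl
        rw [div_one] at hpq₁
        nth_rewrite 3 [show (1:ℝ≥0∞) = 1 + 0 by rw [add_zero]] at hpq₁
        have h0 : 1 / q₁ = 0 := (ENNReal.add_right_inj ENNReal.one_ne_top).mp hpq₁
        rw [one_div, ENNReal.inv_eq_zero] at h0
        exact hq h0
      have hplt : 1 < p₁ := lt_of_le_of_ne hp1 (Ne.symm hp1')
      have hptr : 1 < p₁.toReal := by
        rw [← ENNReal.toReal_one]
        exact ENNReal.toReal_lt_toReal (by norm_num) hp |>.mpr hplt
      have hq0 : q₁ ≠ 0 := by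
        intro h0; rw [h0] at hq1; simp at hq1
      have hqtr : 0 < q₁.toReal := ENNReal.toReal_pos hq0 hq
      have hconj : p₁.toReal.HolderConjugate q₁.toReal := by
        rw [Real.holderConjugate_iff]
        constructor
        · exact hptr
        · have h1 : (1/p₁ + 1/q₁).toReal = (1:ℝ≥0∞).toReal := by rw [hpq₁]
          have hpne0 : p₁ ≠ 0 := (zero_lt_one.trans_le hp1).ne'
          have hqne0 : q₁ ≠ 0 := hq0
          rw [ENNReal.toReal_add (by rw [one_div]; exact ENNReal.inv_ne_top.2 hpne0)
            (by rw [one_div]; exact ENNReal.inv_ne_top.2 hqne0)] at h1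
          simp only [one_div, ENNReal.toReal_inv, ENNReal.toReal_one] at h1
          exact h1
      -- Hölder for real sequences
      have hF : HasSum (fun k => ‖f k‖ ^ p₁.toReal) (‖f‖ ^ p₁.toReal) :=
        lp.hasSum_norm (by positivity) f
      have hG : HasSum (fun k => ‖g k‖ ^ q₁.toReal) (‖g‖ ^ q₁.toReal) :=
        lp.hasSum_norm hqtr g
      obtain ⟨C, hC0, hCle, hCsum⟩ := Real.inner_le_Lp_mul_Lq_hasSum_of_nonneg hconj
        (lp.norm_nonneg' f) (lp.norm_nonneg' g) (fun k => norm_nonneg _)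
        (fun k => norm_nonneg _) hF hG
      exact ⟨hCsum.summable, hCsum.tsum_eq ▸ hCle⟩


/-- Continuous dependence of the multiplier on the analysis sequence: if the `p`-Bessel
sequences `(ψ⁽ˡ⁾ k)` converge to `(ψ k)` in the `ℓ^{q₁}`-sense and `m ∈ ℓ^{p₁}`
(`1/p₁ + 1/q₁ = 1`), then `‖M_{m,(φ),(ψ⁽ˡ⁾)} - M_{m,(φ),(ψ)}‖ → 0`; indeed the difference
is bounded by `B₂ ‖m‖_{p₁} (∑ ‖ψ⁽ˡ⁾ k - ψ k‖^{q₁})^{1/q₁}`. -/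
theorem multiplier_continuous_analysis {X₁ X₂ : Type*}
    [NormedAddCommGroup X₁] [NormedSpace ℝ X₁] [CompleteSpace X₁]
    [TopologicalSpace.SeparableSpace X₁]
    [NormedAddCommGroup X₂] [NormedSpace ℝ X₂] [CompleteSpace X₂]
    [TopologicalSpace.SeparableSpace X₂]
    (hrefl₁ : Function.Surjective (NormedSpace.inclusionInDoubleDual ℝ X₁))
    (hrefl₂ : Function.Surjective (NormedSpace.inclusionInDoubleDual ℝ X₂))
    (p q B₁ B₂ : ℝ) (hp : 1 < p) (hpq : 1 / p + 1 / q = 1) (hB₁ : 0 < B₁) (hB₂ : 0 < B₂)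
    (p₁ q₁ : ℝ≥0∞) [Fact (1 ≤ p₁)] [Fact (1 ≤ q₁)] (hpq₁ : 1 / p₁ + 1 / q₁ = 1)
    (ψ : ℕ → StrongDual ℝ X₁) (ψl : ℕ → ℕ → StrongDual ℝ X₁) (φ : ℕ → X₂)
    (hbesselψ : ∀ f : X₁, ∃ s : ℝ,
      HasSum (fun k => |ψ k f| ^ p) s ∧ s ^ (1 / p) ≤ B₁ * ‖f‖)
    (hbesselψl : ∀ l : ℕ, ∀ f : X₁, ∃ s : ℝ,
      HasSum (fun k => |ψl l k f| ^ p) s ∧ s ^ (1 / p) ≤ B₁ * ‖f‖)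
    (hbesselφ : ∀ h : StrongDual ℝ X₂, ∃ s : ℝ,
      HasSum (fun k => |h (φ k)| ^ q) s ∧ s ^ (1 / q) ≤ B₂ * ‖h‖)
    (m : lp (fun _ : ℕ => ℝ) p₁)
    (hdiff : ∀ l : ℕ, Memℓp (fun k => ψl l k - ψ k) q₁)
    (M : X₁ →L[ℝ] X₂)
    (hM : ∀ f : X₁, HasSum (fun k => ((m : ℕ → ℝ) k * ψ k f) • φ k) (M f))
    (Ml : ℕ → (X₁ →L[ℝ] X₂))
    (hMl : ∀ l : ℕ, ∀ f : X₁,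
      HasSum (fun k => ((m : ℕ → ℝ) k * ψl l k f) • φ k) (Ml l f)) :
    (∀ l : ℕ, ‖Ml l - M‖ ≤
      B₂ * ‖m‖ * ‖(⟨fun k => ψl l k - ψ k, hdiff l⟩ : lp (fun _ : ℕ => StrongDual ℝ X₁) q₁)‖) ∧
    (Tendsto (fun l =>
        ‖(⟨fun k => ψl l k - ψ k, hdiff l⟩ : lp (fun _ : ℕ => StrongDual ℝ X₁) q₁)‖)
        atTop (nhds 0) →
      Tendsto (fun l => ‖Ml l - M‖) atTop (nhds 0)) := by
  have hq_pos : 0 < 1 / q := by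
    have hp0 : 0 < 1 / p := by positivity
    have hlt : 1 / p < 1 := by
      rw [div_lt_one (by linarith)]; exact hp
    linarith
  have hq0 : 0 < q := one_div_pos.mp hq_pos
  have key : ∀ l : ℕ, ‖Ml l - M‖ ≤ B₂ * ‖m‖ *
      ‖(⟨fun k => ψl l k - ψ k, hdiff l⟩ : lp (fun _ : ℕ => StrongDual ℝ X₁) q₁)‖ := by
    intro l
    set Δ : lp (fun _ : ℕ => StrongDual ℝ X₁) q₁ := ⟨fun k => ψl l k - ψ k, hdiff l⟩ with hΔ
    have hΔk : ∀ k, Δ k = ψl l k - ψ k := fun k => rfl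
    obtain ⟨hsummul, htsum⟩ := holder_aux p₁ q₁ hpq₁ m Δ
    refine ContinuousLinearMap.opNorm_le_bound _ (by positivity) (fun f => ?_)
    have hsum : HasSum (fun k => ((m : ℕ → ℝ) k * (Δ k) f) • φ k) ((Ml l - M) f) := by
      have h1 := (hMl l f).sub (hM f)
      have h2 : (fun k => ((m : ℕ → ℝ) k * ψl l k f) • φ k - ((m : ℕ → ℝ) k * ψ k f) • φ k)
          = fun k => ((m : ℕ → ℝ) k * (Δ k) f) • φ k := by
        funext k
        rw [hΔk k, ContinuousLinearMap.sub_apply, mul_sub, sub_smul]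
      rw [h2] at h1
      simpa using h1
    refine NormedSpace.norm_le_dual_bound ℝ _ (by positivity) (fun h => ?_)
    have hφ : ∀ k, ‖h (φ k)‖ ≤ B₂ * ‖h‖ := by
      intro k
      obtain ⟨s, hs, hsb⟩ := hbesselφ h
      have h1 : |h (φ k)| ^ q ≤ s :=
        le_hasSum hs k (fun j _ => Real.rpow_nonneg (abs_nonneg _) _)
      have h2 : (|h (φ k)| ^ q) ^ (1 / q) ≤ s ^ (1 / q) :=
        Real.rpow_le_rpow (Real.rpow_nonneg (abs_nonneg _) _) h1 (le_of_lt hq_pos)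
      rw [← Real.rpow_mul (abs_nonneg _), mul_one_div, div_self hq0.ne', Real.rpow_one] at h2
      rw [Real.norm_eq_abs]
      exact h2.trans hsb
    have hsum2 : HasSum (fun k => ((m : ℕ → ℝ) k * (Δ k) f) * h (φ k)) (h ((Ml l - M) f)) := by
      have := h.hasSum hsum
      simpa [map_smul, smul_eq_mul, mul_comm] using this
    have hb : ∀ k, ‖((m : ℕ → ℝ) k * (Δ k) f) * h (φ k)‖ ≤
        (‖(m : ℕ → ℝ) k‖ * ‖Δ k‖) * (‖f‖ * (B₂ * ‖h‖)) := by
      intro k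
      rw [norm_mul, norm_mul]
      calc ‖(m : ℕ → ℝ) k‖ * ‖(Δ k) f‖ * ‖h (φ k)‖
          ≤ ‖(m : ℕ → ℝ) k‖ * (‖Δ k‖ * ‖f‖) * (B₂ * ‖h‖) := by
            gcongr
            · exact (Δ k).le_opNorm f
            · exact hφ k
        _ = (‖(m : ℕ → ℝ) k‖ * ‖Δ k‖) * (‖f‖ * (B₂ * ‖h‖)) := by ring
    calc ‖h ((Ml l - M) f)‖
        ≤ ∑' k, (‖(m : ℕ → ℝ) k‖ * ‖Δ k‖) * (‖f‖ * (B₂ * ‖h‖)) := by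
          rw [← hsum2.tsum_eq]
          exact tsum_of_norm_bounded (hsummul.mul_right _).hasSum hb
      _ = (∑' k, ‖(m : ℕ → ℝ) k‖ * ‖Δ k‖) * (‖f‖ * (B₂ * ‖h‖)) := tsum_mul_right
      _ ≤ (‖m‖ * ‖Δ‖) * (‖f‖ * (B₂ * ‖h‖)) :=
          mul_le_mul_of_nonneg_right htsum (by positivity)
      _ = B₂ * ‖m‖ * ‖Δ‖ * ‖f‖ * ‖h‖ := by ring
  refine ⟨key, fun htend => ?_⟩
  have h0 : Tendsto (fun l => B₂ * ‖m‖ *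
      ‖(⟨fun k => ψl l k - ψ k, hdiff l⟩ : lp (fun _ : ℕ => StrongDual ℝ X₁) q₁)‖)
      atTop (nhds 0) := by
    have := htend.const_mul (B₂ * ‖m‖)
    simpa using this
  exact squeeze_zero (fun l => norm_nonneg _) key h0
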